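/- (Convergence of the PC-algorithm I with outer perturbations.) Let ν ∈ (0,1) and γ ∈ (0,2). Let {e1^k}, {e2^k} be sequences in H with Σ_{k=0}^∞ ‖e1^k‖ < +∞ and Σ_{k=0}^∞ ‖e2^k‖ < +∞. Let x^0 ∈ H and let {x^k}, {y^k}, {β_k} satisfy, for every k ≥ 0: β_k > 0 with inf_k β_k > 0; y^k = P_C(x^k − β_k F(x^k)) + e1^k; β_k‖F(x^k) − F(y^k − e1^k)‖ ≤ ν‖x^k − y^k + e1^k‖; d^k := (x^k − y^k + e1^k) − β_k(F(x^k) − F(y^k − e1^k)) ≠ 0; ρ_k := ⟨x^k − y^k + e1^k, d^k⟩ / ‖d^k‖²; and x^{k+1} = x^k − γ ρ_k d^k + e2^k. Then {x^k} converges weakly (i.e., ⟨x^k, u⟩ → ⟨x̂, u⟩ for every u ∈ H) to some point x̂ ∈ SOL(C,F). -/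

import Mathlib

open RealInnerProductSpace

section Aux
open Filter

-- Lemma A: bounded-perturbation monotone convergence
lemma aux_seq_conv (a ε : ℕ → ℝ) (ha : ∀ k, 0 ≤ a k) (hε : ∀ k, 0 ≤ ε k)
    (hs : Summable ε) (hrec : ∀ k, a (k + 1) ≤ a k + ε k) :
    ∃ l, Tendsto a atTop (nhds l) := by
  set t : ℕ → ℝ := fun k => ∑' j, ε (j + k) with ht
  have htail : ∀ k, t k = ε k + t (k + 1) := by
    intro k
    have h1 := Summable.tsum_eq_zero_add ((summable_nat_add_iff (f := ε) k).2 hs)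
    have h2 : (∑' j, ε (j + 1 + k)) = ∑' j, ε (j + (k + 1)) := by
      congr 1; ext j; congr 1; ring
    simp only [ht, h2] at h1 ⊢
    simpa using h1
  have htnn : ∀ k, 0 ≤ t k := fun k => tsum_nonneg (fun j => hε _)
  have hanti : Antitone (fun k => a k + t k) := by
    apply antitone_nat_of_succ_le
    intro k
    have := hrec k
    have := htail k
    linarith
  have hbdd : BddBelow (Set.range (fun k => a k + t k)) := by
    refine ⟨0, ?_⟩
    rintro v ⟨k, rfl⟩
    exact add_nonneg (ha k) (htnn k)
  have hconv : Tendsto (fun k => a k + t k) atTop (nhds (⨅ k, a k + t k)) :=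
    tendsto_atTop_ciInf hanti hbdd
  have ht0 : Tendsto t atTop (nhds 0) := by
    have h2 : ∀ k, t k = (∑' j, ε j) - ∑ j ∈ Finset.range k, ε j := by
      intro k
      have h3 := (Summable.sum_add_tsum_nat_add (f := ε) k hs).symm
      have heq : (∑' j, ε (j + k)) = ∑' j, ε (k + j) := by
        congr 1; ext j; congr 1; ring
      simp only [ht, heq]; linarith
    rw [funext h2]
    have h4 : Tendsto (fun k => ∑ j ∈ Finset.range k, ε j) atTop (nhds (∑' j, ε j)) :=
      hs.hasSum.tendsto_sum_nat
    have h5 := (tendsto_const_nhds (x := (∑' j, ε j)) (f := atTop (α := ℕ))).sub h4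
    simpa using h5
  refine ⟨(⨅ k, a k + t k) - 0, ?_⟩
  have h6 := hconv.sub ht0
  have h5 : (fun k => (a k + t k) - t k) = a := by ext k; ring
  rwa [h5] at h6

-- Lemma B
lemma aux_sq_to_zero (s : ℕ → ℝ) (B : ℝ) (hnn : ∀ k, 0 ≤ s k)
    (hb : ∀ n, ∑ k ∈ Finset.range n, s k ≤ B) :
    Tendsto s atTop (nhds 0) :=
  (summable_of_sum_range_le hnn hb).tendsto_atTop_zero

lemma aux_ultra_lim (x : ℕ → ℝ) (a b : ℝ) (hb : ∀ k, x k ∈ Set.Icc a b)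
    (U : Ultrafilter ℕ) : ∃ c, Tendsto x U (nhds c) := by
  have hc : IsCompact (Set.Icc a b) := isCompact_Icc
  have hle : ↑(U.map x) ≤ Filter.principal (Set.Icc a b) := by
    rw [le_principal_iff]
    exact Filter.mem_map.2 (Filter.univ_mem' (fun k => hb k))
  obtain ⟨c, _, hcle⟩ := hc.ultrafilter_le_nhds (U.map x) hle
  exact ⟨c, hcle⟩

lemma aux_weak_ultra {H : Type*} [NormedAddCommGroup H] [InnerProductSpace ℝ H]
    [CompleteSpace H] (x : ℕ → H) (M : ℝ) (hM : 0 ≤ M) (hb : ∀ k, ‖x k‖ ≤ M)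
    (U : Ultrafilter ℕ) :
    ∃ xh : H, ‖xh‖ ≤ M ∧ ∀ u : H, Tendsto (fun k => ⟪x k, u⟫) U (nhds ⟪xh, u⟫) := by
  have key : ∀ u : H, ∃ c, Tendsto (fun k => ⟪x k, u⟫) U (nhds c) := by
    intro u
    apply aux_ultra_lim _ (-(M * ‖u‖)) (M * ‖u‖)
    intro k
    have h1 : |⟪x k, u⟫| ≤ ‖x k‖ * ‖u‖ := abs_real_inner_le_norm _ _
    have h2 : ‖x k‖ * ‖u‖ ≤ M * ‖u‖ := by
      apply mul_le_mul_of_nonneg_right (hb k) (norm_nonneg u)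
    have h3 := abs_le.1 h1
    constructor <;> linarith
  choose f hf using key
  have hadd : ∀ u v : H, f (u + v) = f u + f v := by
    intro u v
    have h1 : Tendsto (fun k => ⟪x k, u + v⟫) U (nhds (f u + f v)) := by
      have := (hf u).add (hf v)
      simpa [inner_add_right] using this
    exact tendsto_nhds_unique (hf (u + v)) h1
  have hsmul : ∀ (c : ℝ) (u : H), f (c • u) = c * f u := by
    intro c u
    have h1 : Tendsto (fun k => ⟪x k, c • u⟫) U (nhds (c * f u)) := by
      have := (hf u).const_mul c
      simpa [real_inner_smul_right] using this
    exact tendsto_nhds_unique (hf (c • u)) h1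
  have hbound : ∀ u : H, |f u| ≤ M * ‖u‖ := by
    intro u
    have h1 : Tendsto (fun k => |⟪x k, u⟫|) U (nhds (|f u|)) := (hf u).abs
    apply le_of_tendsto h1
    filter_upwards with k
    calc |⟪x k, u⟫| ≤ ‖x k‖ * ‖u‖ := abs_real_inner_le_norm _ _
      _ ≤ M * ‖u‖ := mul_le_mul_of_nonneg_right (hb k) (norm_nonneg u)
  let lin : H →ₗ[ℝ] ℝ :=
    { toFun := f, map_add' := hadd, map_smul' := by intro c u; simpa using hsmul c u }
  let g : H →L[ℝ] ℝ := LinearMap.mkContinuous lin M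
    (fun u => by
      have h0 : lin u = f u := rfl
      rw [show ‖lin u‖ = |f u| from by rw [h0]; rfl]
      exact hbound u)
  refine ⟨(InnerProductSpace.toDual ℝ H).symm g, ?_, ?_⟩
  · have h1 : ‖(InnerProductSpace.toDual ℝ H).symm g‖ = ‖g‖ := by
      simp
    rw [h1]
    exact LinearMap.mkContinuous_norm_le lin hM _
  · intro u
    have h2 : ⟪(InnerProductSpace.toDual ℝ H).symm g, u⟫ = g u :=
      InnerProductSpace.toDual_symm_apply
    rw [h2]
    exact hf u

lemma aux_weak_closed {H : Type*} [NormedAddCommGroup H] [InnerProductSpace ℝ H]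
    [CompleteSpace H] (C : Set H) (hCcl : IsClosed C) (hCcv : Convex ℝ C)
    (z : ℕ → H) (hzC : ∀ k, z k ∈ C) (xh : H) (U : Ultrafilter ℕ)
    (hlim : ∀ u : H, Tendsto (fun k => ⟪z k, u⟫) U (nhds ⟪xh, u⟫)) : xh ∈ C := by
  by_contra hmem
  obtain ⟨f, u0, hfa, hfx⟩ := geometric_hahn_banach_closed_point hCcv hCcl hmem
  set v : H := (InnerProductSpace.toDual ℝ H).symm f with hv
  have hfv : ∀ w : H, f w = ⟪w, v⟫ := by
    intro w
    have : ⟪v, w⟫ = f w := InnerProductSpace.toDual_symm_apply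
    rw [← this, real_inner_comm]
  have h1 : Tendsto (fun k => ⟪z k, v⟫) U (nhds ⟪xh, v⟫) := hlim v
  have h2 : ⟪xh, v⟫ ≤ u0 := by
    apply le_of_tendsto h1
    filter_upwards with k
    rw [← hfv]
    exact (hfa (z k) (hzC k)).le
  rw [← hfv] at h2
  linarith

lemma aux_minty {H : Type*} [NormedAddCommGroup H] [InnerProductSpace ℝ H]
    (C : Set H) (hCcv : Convex ℝ C) (F : H → H) (L : ℝ)
    (hLip : ∀ u v : H, ‖F u - F v‖ ≤ L * ‖u - v‖)
    (xh : H) (hxhC : xh ∈ C) (h : ∀ c ∈ C, 0 ≤ ⟪F c, c - xh⟫) :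
    ∀ c ∈ C, 0 ≤ ⟪F xh, c - xh⟫ := by
  intro c hc
  by_contra hneg
  push_neg at hneg
  set V : ℝ := ⟪F xh, c - xh⟫ with hV
  have key : ∀ t : ℝ, t ∈ Set.Ioc (0:ℝ) 1 → -(L * t * ‖c - xh‖^2) ≤ V := by
    intro t ⟨ht0, ht1⟩
    set zt : H := xh + t • (c - xh) with hzt
    have hztC : zt ∈ C := by
      have := hCcv.add_smul_sub_mem hxhC hc ⟨ht0.le, ht1⟩
      exact this
    have h1 : 0 ≤ ⟪F zt, zt - xh⟫ := h zt hztC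
    have h2 : zt - xh = t • (c - xh) := by rw [hzt]; abel
    have h3 : 0 ≤ ⟪F zt, c - xh⟫ := by
      rw [h2, real_inner_smul_right] at h1
      nlinarith
    have h4 : ⟪F zt - F xh, c - xh⟫ ≤ L * t * ‖c - xh‖^2 := by
      calc ⟪F zt - F xh, c - xh⟫ ≤ ‖F zt - F xh‖ * ‖c - xh‖ :=
            real_inner_le_norm _ _
        _ ≤ (L * ‖zt - xh‖) * ‖c - xh‖ :=
            mul_le_mul_of_nonneg_right (hLip _ _) (norm_nonneg _)
        _ = L * t * ‖c - xh‖^2 := by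
            rw [h2, norm_smul, Real.norm_eq_abs, abs_of_pos ht0]; ring
    have h5 : ⟪F zt, c - xh⟫ - ⟪F xh, c - xh⟫ = ⟪F zt - F xh, c - xh⟫ := by
      rw [inner_sub_left]
    linarith
  set S : ℝ := L * ‖c - xh‖^2 with hS
  rcases le_or_gt S 0 with hS0 | hS0
  · have h9 := key 1 ⟨one_pos, le_refl 1⟩
    have : -(L * 1 * ‖c - xh‖^2) = -S := by rw [hS]; ring
    linarith
  · have htpos : 0 < min 1 (-V / (2 * S)) :=
      lt_min one_pos (div_pos (by linarith) (by linarith))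
    have ht : min 1 (-V / (2 * S)) ∈ Set.Ioc (0:ℝ) 1 := ⟨htpos, min_le_left _ _⟩
    have h9 := key _ ht
    have h7 : L * (min 1 (-V / (2 * S))) * ‖c - xh‖^2 ≤ S * (-V / (2 * S)) := by
      have hmin : min 1 (-V / (2 * S)) ≤ -V / (2 * S) := min_le_right _ _
      calc L * (min 1 (-V / (2 * S))) * ‖c - xh‖^2
          = S * (min 1 (-V / (2 * S))) := by rw [hS]; ring
        _ ≤ S * (-V / (2 * S)) := mul_le_mul_of_nonneg_left hmin hS0.le
    have h8 : S * (-V / (2 * S)) = -V / 2 := by field_simp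
    linarith

end Aux

set_option maxHeartbeats 1000000 in
theorem stmt_3 {H : Type*} [NormedAddCommGroup H] [InnerProductSpace ℝ H]
    [CompleteSpace H]
    (C : Set H) (hCne : C.Nonempty) (hCcl : IsClosed C) (hCcv : Convex ℝ C)
    (P : H → H) (hPmem : ∀ u : H, P u ∈ C)
    (hPchar : ∀ u : H, ∀ c ∈ C, ⟪u - P u, c - P u⟫ ≤ 0)
    (F : H → H) (hmono : ∀ u v : H, 0 ≤ ⟪F u - F v, u - v⟫)
    (L : ℝ) (hL : 0 < L) (hLip : ∀ u v : H, ‖F u - F v‖ ≤ L * ‖u - v‖)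
    (hSOL : ∃ p ∈ C, ∀ z ∈ C, 0 ≤ ⟪F p, z - p⟫)
    (ν γ : ℝ) (hν : ν ∈ Set.Ioo (0 : ℝ) 1) (hγ : γ ∈ Set.Ioo (0 : ℝ) 2)
    (e1 e2 : ℕ → H)
    (he1 : Summable (fun k => ‖e1 k‖)) (he2 : Summable (fun k => ‖e2 k‖))
    (x y : ℕ → H) (β : ℕ → ℝ) (d : ℕ → H) (ρ : ℕ → ℝ)
    (hβpos : ∀ k, 0 < β k) (hβinf : ∃ b > (0 : ℝ), ∀ k, b ≤ β k)
    (hy : ∀ k, y k = P (x k - β k • F (x k)) + e1 k)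
    (hstep : ∀ k, β k * ‖F (x k) - F (y k - e1 k)‖ ≤ ν * ‖x k - y k + e1 k‖)
    (hd : ∀ k, d k = (x k - y k + e1 k) - β k • (F (x k) - F (y k - e1 k)))
    (hdne : ∀ k, d k ≠ 0)
    (hρ : ∀ k, ρ k = ⟪x k - y k + e1 k, d k⟫ / ‖d k‖ ^ 2)
    (hx : ∀ k, x (k + 1) = x k - (γ * ρ k) • d k + e2 k) :
    ∃ xhat, (xhat ∈ C ∧ ∀ z ∈ C, 0 ≤ ⟪F xhat, z - xhat⟫) ∧
      ∀ u : H, Filter.Tendsto (fun k => ⟪x k, u⟫) Filter.atTop (nhds ⟪xhat, u⟫) := by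
  classical
  open Filter in
  obtain ⟨hν0, hν1⟩ := hν
  obtain ⟨hγ0, hγ2⟩ := hγ
  obtain ⟨p, hpC, hpVI⟩ := hSOL
  obtain ⟨b, hb0, hbβ⟩ := hβinf
  -- basic abbreviations
  set z : ℕ → H := fun k => y k - e1 k with hzdef
  set w : ℕ → H := fun k => x k - z k with hwdef
  have hzP : ∀ k, z k = P (x k - β k • F (x k)) := by
    intro k; simp only [hzdef, hy k]; abel
  have hzC : ∀ k, z k ∈ C := fun k => (hzP k) ▸ hPmem _
  have hwid : ∀ k, x k - y k + e1 k = w k := by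
    intro k; simp only [hwdef, hzdef]; abel
  have hstep' : ∀ k, β k * ‖F (x k) - F (z k)‖ ≤ ν * ‖w k‖ := by
    intro k; have h := hstep k; rw [hwid] at h; exact h
  have hd' : ∀ k, d k = w k - β k • (F (x k) - F (z k)) := by
    intro k; have h := hd k; rw [hwid] at h; exact h
  have hρ' : ∀ k, ρ k = ⟪w k, d k⟫ / ‖d k‖ ^ 2 := by
    intro k; have h := hρ k; rw [hwid] at h; exact h
  have hdn : ∀ k, 0 < ‖d k‖ := fun k => norm_pos_iff.2 (hdne k)
  -- inner product facts
  have hA : ∀ k, (1 - ν) * ‖w k‖ ^ 2 ≤ ⟪w k, d k⟫ := by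
    intro k
    rw [hd' k, inner_sub_right, real_inner_smul_right, real_inner_self_eq_norm_sq]
    have h1 : ⟪w k, F (x k) - F (z k)⟫ ≤ ‖w k‖ * ‖F (x k) - F (z k)‖ :=
      real_inner_le_norm _ _
    have h2 : β k * (‖w k‖ * ‖F (x k) - F (z k)‖) ≤ ‖w k‖ * (ν * ‖w k‖) := by
      calc β k * (‖w k‖ * ‖F (x k) - F (z k)‖)
          = ‖w k‖ * (β k * ‖F (x k) - F (z k)‖) := by ring
        _ ≤ ‖w k‖ * (ν * ‖w k‖) :=
            mul_le_mul_of_nonneg_left (hstep' k) (norm_nonneg _)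
    nlinarith [norm_nonneg (w k), (hβpos k).le,
      mul_le_mul_of_nonneg_left h1 (hβpos k).le]
  have hB : ∀ k, ‖d k‖ ≤ (1 + ν) * ‖w k‖ := by
    intro k
    rw [hd' k]
    calc ‖w k - β k • (F (x k) - F (z k))‖
        ≤ ‖w k‖ + ‖β k • (F (x k) - F (z k))‖ := norm_sub_le _ _
      _ = ‖w k‖ + β k * ‖F (x k) - F (z k)‖ := by
          rw [norm_smul, Real.norm_eq_abs, abs_of_pos (hβpos k)]
      _ ≤ ‖w k‖ + ν * ‖w k‖ := by linarith [hstep' k]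
      _ = (1 + ν) * ‖w k‖ := by ring
  have hrho : ∀ k, ρ k * ‖d k‖ ^ 2 = ⟪w k, d k⟫ := by
    intro k
    rw [hρ' k, div_mul_cancel₀]
    exact pow_ne_zero 2 (hdn k).ne'
  have hρnn : ∀ k, 0 ≤ ρ k := by
    intro k
    rw [hρ' k]
    apply div_nonneg _ (sq_nonneg _)
    have := hA k
    nlinarith [sq_nonneg ‖w k‖]
  have hC5 : ∀ k, ((1 - ν) / (1 + ν)) ^ 2 * ‖w k‖ ^ 2 ≤ ρ k ^ 2 * ‖d k‖ ^ 2 := by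
    intro k
    have hAk := hA k
    have hBk := hB k
    have hrk := hrho k
    have hρk := hρnn k
    have hdk := hdn k
    have hwnn : (0:ℝ) ≤ ‖w k‖ := norm_nonneg _
    have h1ν : (0:ℝ) < 1 + ν := by linarith
    -- ρ² D² (1+ν)² ‖w‖² ≥ ρ²D⁴ = (ρD²)² = ⟪w,d⟫² ≥ (1-ν)²‖w‖⁴
    have key : ρ k ^ 2 * ‖d k‖ ^ 2 * ((1 + ν) ^ 2 * ‖w k‖ ^ 2) ≥
        ((1 - ν) ^ 2 * ‖w k‖ ^ 2) * ‖w k‖ ^ 2 := by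
      have e1 : ρ k ^ 2 * ‖d k‖ ^ 2 * ‖d k‖ ^ 2 = ⟪w k, d k⟫ ^ 2 := by
        rw [← hrk]; ring
      have hB2 : ‖d k‖ ^ 2 ≤ (1 + ν) ^ 2 * ‖w k‖ ^ 2 := by
        nlinarith [hBk, norm_nonneg (d k), norm_nonneg (w k)]
      have hA2 : ((1 - ν) * ‖w k‖ ^ 2) ^ 2 ≤ ⟪w k, d k⟫ ^ 2 := by
        have hAnn : 0 ≤ (1 - ν) * ‖w k‖ ^ 2 :=
          mul_nonneg (by linarith) (sq_nonneg _)
        nlinarith [hAk]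
      nlinarith [mul_le_mul_of_nonneg_left hB2
        (mul_nonneg (sq_nonneg (ρ k)) (sq_nonneg ‖d k‖)), e1, hA2]
    have h2 : ((1 - ν) / (1 + ν)) ^ 2 * ‖w k‖ ^ 2 * ((1 + ν) ^ 2 * ‖w k‖ ^ 2) =
        ((1 - ν) ^ 2 * ‖w k‖ ^ 2) * ‖w k‖ ^ 2 := by
      field_simp
    rcases eq_or_lt_of_le hwnn with hw0 | hw0
    · rw [← hw0]; simpa using mul_nonneg (sq_nonneg (ρ k)) (sq_nonneg ‖d k‖)
    · have hpos : 0 < (1 + ν) ^ 2 * ‖w k‖ ^ 2 := by positivity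
      rw [← mul_le_mul_iff_left₀ hpos, h2]
      linarith [key]
  -- descent inequality for any solution q
  set c0 : ℝ := ((1 - ν) / (1 + ν)) ^ 2 with hc0def
  set cg : ℝ := γ * (2 - γ) * c0 with hcgdef
  have hc0pos : 0 < c0 := by
    apply sq_pos_of_ne_zero
    apply div_ne_zero <;> intro h <;> nlinarith
  have hcgpos : 0 < cg := by
    apply mul_pos (mul_pos hγ0 (by linarith)) hc0pos
  have h6 : ∀ q, q ∈ C → (∀ c ∈ C, 0 ≤ ⟪F q, c - q⟫) → ∀ k,
      ⟪w k, d k⟫ ≤ ⟪x k - q, d k⟫ := by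
    intro q hqC hqVI k
    have hsplit : ⟪x k - q, d k⟫ = ⟪w k, d k⟫ + ⟪z k - q, d k⟫ := by
      rw [← inner_add_left]
      congr 1
      simp only [hwdef]
      abel
    rw [hsplit]
    have hT : 0 ≤ ⟪z k - q, d k⟫ := by
      have hvec : d k = ((x k - β k • F (x k)) - z k) + β k • F (z k) := by
        rw [hd' k, smul_sub]
        simp only [hwdef]
        abel
      have hdecomp : ⟪z k - q, d k⟫ =
          ⟪z k - q, (x k - β k • F (x k)) - z k⟫ + β k * ⟪z k - q, F (z k)⟫ := by
        rw [hvec, inner_add_right, real_inner_smul_right]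
      rw [hdecomp]
      have hT1 : 0 ≤ ⟪z k - q, (x k - β k • F (x k)) - z k⟫ := by
        have h1 := hPchar (x k - β k • F (x k)) q hqC
        rw [← hzP k] at h1
        have h2 : ⟪z k - q, (x k - β k • F (x k)) - z k⟫ =
            -⟪(x k - β k • F (x k)) - z k, q - z k⟫ := by
          rw [real_inner_comm, show z k - q = -(q - z k) from by abel,
            inner_neg_right]
        rw [h2]
        linarith
      have hT2 : 0 ≤ ⟪z k - q, F (z k)⟫ := by
        have h1 := hmono (z k) q
        have h2 := hqVI (z k) (hzC k)
        have h3 : ⟪z k - q, F (z k)⟫ =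
            ⟪F (z k) - F q, z k - q⟫ + ⟪F q, z k - q⟫ := by
          simp only [inner_sub_left, inner_sub_right]
          rw [real_inner_comm (z k) (F (z k)), real_inner_comm q (F (z k))]
          ring
        rw [h3]
        linarith
      nlinarith [(hβpos k).le]
    linarith
  have hdesc : ∀ q, q ∈ C → (∀ c ∈ C, 0 ≤ ⟪F q, c - q⟫) → ∀ k,
      ‖x k - (γ * ρ k) • d k - q‖ ^ 2 ≤ ‖x k - q‖ ^ 2 - cg * ‖w k‖ ^ 2 := by
    intro q hqC hqVI k
    have hexp : ‖x k - (γ * ρ k) • d k - q‖ ^ 2 =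
        ‖x k - q‖ ^ 2 - 2 * ((γ * ρ k) * ⟪x k - q, d k⟫) +
          (γ * ρ k) ^ 2 * ‖d k‖ ^ 2 := by
      have h1 : x k - (γ * ρ k) • d k - q = (x k - q) - (γ * ρ k) • d k := by abel
      rw [h1, norm_sub_sq_real, real_inner_smul_right, norm_smul,
        Real.norm_eq_abs, abs_of_nonneg (mul_nonneg hγ0.le (hρnn k))]
      ring
    rw [hexp]
    have h6k := h6 q hqC hqVI k
    have e2 : ρ k * ⟪w k, d k⟫ = ρ k ^ 2 * ‖d k‖ ^ 2 := by
      rw [← hrho k]; ring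
    have e3 : γ * ρ k * ⟪w k, d k⟫ ≤ γ * ρ k * ⟪x k - q, d k⟫ :=
      mul_le_mul_of_nonneg_left h6k (mul_nonneg hγ0.le (hρnn k))
    have e4 : γ * (2 - γ) * (c0 * ‖w k‖ ^ 2) ≤ γ * (2 - γ) * (ρ k ^ 2 * ‖d k‖ ^ 2) :=
      mul_le_mul_of_nonneg_left (hC5 k) (mul_pos hγ0 (by linarith)).le
    have e5 : γ * ρ k * ⟪w k, d k⟫ = γ * (ρ k ^ 2 * ‖d k‖ ^ 2) := by
      rw [← e2]; ring
    rw [hcgdef]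
    nlinarith [e3, e4, e5]
  have htri : ∀ q, ∀ k, ‖x (k + 1) - q‖ ≤ ‖x k - (γ * ρ k) • d k - q‖ + ‖e2 k‖ := by
    intro q k
    have h1 : x (k + 1) - q = (x k - (γ * ρ k) • d k - q) + e2 k := by
      rw [hx k]; abel
    rw [h1]
    exact norm_add_le _ _
  have hmonoq : ∀ q, q ∈ C → (∀ c ∈ C, 0 ≤ ⟪F q, c - q⟫) → ∀ k,
      ‖x (k + 1) - q‖ ≤ ‖x k - q‖ + ‖e2 k‖ := by
    intro q hqC hqVI k
    have h1 := hdesc q hqC hqVI k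
    have h2 : ‖x k - (γ * ρ k) • d k - q‖ ≤ ‖x k - q‖ := by
      nlinarith [norm_nonneg (x k - (γ * ρ k) • d k - q), norm_nonneg (x k - q),
        mul_nonneg hcgpos.le (sq_nonneg ‖w k‖)]
    linarith [htri q k]
  have hnormconv : ∀ q, q ∈ C → (∀ c ∈ C, 0 ≤ ⟪F q, c - q⟫) →
      ∃ l, Filter.Tendsto (fun k => ‖x k - q‖) Filter.atTop (nhds l) := by
    intro q hqC hqVI
    exact aux_seq_conv _ _ (fun k => norm_nonneg _) (fun k => norm_nonneg _)
      he2 (hmonoq q hqC hqVI)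
  -- boundedness and vanishing of w
  set E : ℝ := ∑' k, ‖e2 k‖ with hEdef
  have hEnn : 0 ≤ E := tsum_nonneg (fun k => norm_nonneg _)
  set M1 : ℝ := ‖x 0 - p‖ + E with hM1def
  have hM1nn : 0 ≤ M1 := add_nonneg (norm_nonneg _) hEnn
  have hεE : ∀ k, ‖e2 k‖ ≤ E := fun k => Summable.le_tsum he2 k (fun j _ => norm_nonneg _)
  have hbnd : ∀ k, ‖x k - p‖ ≤ M1 := by
    have hpart : ∀ k, ‖x k - p‖ ≤ ‖x 0 - p‖ + ∑ j ∈ Finset.range k, ‖e2 j‖ := by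
      intro k
      induction k with
      | zero => simp
      | succ n ih =>
        have h1 := hmonoq p hpC hpVI n
        rw [Finset.sum_range_succ]
        linarith
    intro k
    have h2 : ∑ j ∈ Finset.range k, ‖e2 j‖ ≤ E :=
      Summable.sum_le_tsum (Finset.range k) (fun i _ => norm_nonneg _) he2
    linarith [hpart k]
  have hub : ∀ k, ‖x k - (γ * ρ k) • d k - p‖ ≤ M1 := by
    intro k
    have h1 := hdesc p hpC hpVI k
    nlinarith [norm_nonneg (x k - (γ * ρ k) • d k - p), hbnd k,
      norm_nonneg (x k - p), mul_nonneg hcgpos.le (sq_nonneg ‖w k‖)]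
  have hstepineq : ∀ k, cg * ‖w k‖ ^ 2 ≤
      ‖x k - p‖ ^ 2 - ‖x (k + 1) - p‖ ^ 2 + (2 * M1 + E) * ‖e2 k‖ := by
    intro k
    have h1 := hdesc p hpC hpVI k
    have h2 := htri p k
    have h3 := hub k
    have h4 := hεE k
    nlinarith [norm_nonneg (e2 k), norm_nonneg (x (k + 1) - p),
      norm_nonneg (x k - (γ * ρ k) • d k - p)]
  have htel : ∀ n, ∑ k ∈ Finset.range n, cg * ‖w k‖ ^ 2 ≤
      ‖x 0 - p‖ ^ 2 + (2 * M1 + E) * E := by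
    intro n
    have h1 : ∑ k ∈ Finset.range n, cg * ‖w k‖ ^ 2 ≤
        ‖x 0 - p‖ ^ 2 - ‖x n - p‖ ^ 2 +
          (2 * M1 + E) * ∑ k ∈ Finset.range n, ‖e2 k‖ := by
      induction n with
      | zero => simp
      | succ m ih =>
        rw [Finset.sum_range_succ, Finset.sum_range_succ]
        have := hstepineq m
        nlinarith
    have h2 : ∑ k ∈ Finset.range n, ‖e2 k‖ ≤ E :=
      Summable.sum_le_tsum (Finset.range n) (fun i _ => norm_nonneg _) he2
    nlinarith [sq_nonneg ‖x n - p‖, hEnn, hM1nn]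
  have hw2z : Filter.Tendsto (fun k => cg * ‖w k‖ ^ 2) Filter.atTop (nhds 0) :=
    aux_sq_to_zero _ _ (fun k => mul_nonneg hcgpos.le (sq_nonneg _)) htel
  have hwsq : Filter.Tendsto (fun k => ‖w k‖ ^ 2) Filter.atTop (nhds 0) := by
    have h1 := hw2z.const_mul (1 / cg)
    have h2 : (fun k => 1 / cg * (cg * ‖w k‖ ^ 2)) = fun k => ‖w k‖ ^ 2 := by
      funext k; field_simp
    rw [h2] at h1
    simpa using h1
  have hw0 : Filter.Tendsto (fun k => ‖w k‖) Filter.atTop (nhds 0) := by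
    have h1 := hwsq.sqrt
    have h2 : (fun k => Real.sqrt (‖w k‖ ^ 2)) = fun k => ‖w k‖ := by
      funext k; exact Real.sqrt_sq (norm_nonneg _)
    rw [h2] at h1
    simpa using h1
  have hxb : ∀ k, ‖x k‖ ≤ M1 + ‖p‖ := by
    intro k
    have := norm_sub_norm_le (x k) p
    linarith [hbnd k]
  have hFxb : ∀ k, ‖F (x k)‖ ≤ ‖F p‖ + L * M1 := by
    intro k
    have h1 : ‖F (x k) - F p‖ ≤ L * ‖x k - p‖ := hLip _ _
    have h2 := norm_sub_norm_le (F (x k)) (F p)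
    have h3 : L * ‖x k - p‖ ≤ L * M1 := mul_le_mul_of_nonneg_left (hbnd k) hL.le
    linarith
  -- master claim: weak limit along any ultrafilter finer than atTop is a solution
  have master : ∀ U : Ultrafilter ℕ, ↑U ≤ (Filter.atTop : Filter ℕ) →
      ∃ xh : H, (xh ∈ C ∧ ∀ c ∈ C, 0 ≤ ⟪F xh, c - xh⟫) ∧
        ∀ u : H, Filter.Tendsto (fun k => ⟪x k, u⟫) U (nhds ⟪xh, u⟫) := by
    intro U hU
    obtain ⟨xh, _, hxhw⟩ := aux_weak_ultra x (M1 + ‖p‖)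
      (add_nonneg hM1nn (norm_nonneg _)) hxb U
    have hwu0 : ∀ u : H, Filter.Tendsto (fun k => ⟪w k, u⟫) Filter.atTop (nhds 0) := by
      intro u
      apply squeeze_zero_norm (a := fun k => ‖w k‖ * ‖u‖)
      · intro k
        exact abs_real_inner_le_norm _ _
      · simpa using hw0.mul_const ‖u‖
    have hzw : ∀ u : H, Filter.Tendsto (fun k => ⟪z k, u⟫) U (nhds ⟪xh, u⟫) := by
      intro u
      have h1 := (hwu0 u).mono_left hU
      have h2 := (hxhw u).sub h1
      have h3 : (fun k => ⟪x k, u⟫ - ⟪w k, u⟫) = fun k => ⟪z k, u⟫ := by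
        funext k
        rw [← inner_sub_left]
        congr 1
        simp only [hwdef]
        abel
      rw [h3] at h2
      simpa using h2
    have hxhC : xh ∈ C := aux_weak_closed C hCcl hCcv z hzC xh U hzw
    have hVIlim : ∀ c ∈ C, 0 ≤ ⟪F c, c - xh⟫ := by
      intro c hc
      set r : ℕ → ℝ := fun k => ⟪w k, c - z k⟫ / β k - ⟪F (x k), w k⟫ with hrdef
      have hineq : ∀ k, r k ≤ ⟪F c, c - x k⟫ := by
        intro k
        have hproj := hPchar (x k - β k • F (x k)) c hc
        rw [← hzP k] at hproj
        have h4 : ⟪w k, c - z k⟫ - β k * ⟪F (x k), c - z k⟫ ≤ 0 := by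
          have hdec : (x k - β k • F (x k)) - z k = w k - β k • F (x k) := by
            simp only [hwdef]
            abel
          rw [hdec, inner_sub_left, real_inner_smul_left] at hproj
          linarith
        have h5 : ⟪w k, c - z k⟫ / β k ≤ ⟪F (x k), c - z k⟫ :=
          (div_le_iff₀ (hβpos k)).2 (by nlinarith)
        have h6 : 0 ≤ ⟪F c - F (x k), c - x k⟫ := hmono c (x k)
        have h7 : ⟪F c, c - x k⟫ - ⟪F (x k), c - x k⟫ = ⟪F c - F (x k), c - x k⟫ := by
          rw [inner_sub_left]
        have h8 : ⟪F (x k), c - x k⟫ = ⟪F (x k), c - z k⟫ - ⟪F (x k), w k⟫ := by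
          rw [← inner_sub_right]
          congr 1
          simp only [hwdef]
          abel
        simp only [hrdef]
        linarith
      have hr0 : Filter.Tendsto r Filter.atTop (nhds 0) := by
        set K : ℝ := ‖c‖ + (M1 + ‖p‖) with hKdef
        set MF : ℝ := ‖F p‖ + L * M1 with hMFdef
        apply squeeze_zero_norm
          (a := fun k => 1 / b * (‖w k‖ * (K + ‖w k‖)) + MF * ‖w k‖)
        · intro k
          have hzb : ‖c - z k‖ ≤ K + ‖w k‖ := by
            have e1 : ‖c - z k‖ ≤ ‖c‖ + ‖z k‖ := norm_sub_le _ _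
            have e2 : z k = x k - w k := by simp only [hwdef]; abel
            have e3 : ‖z k‖ ≤ ‖x k‖ + ‖w k‖ := by
              rw [e2]; exact norm_sub_le _ _
            have := hxb k
            simp only [hKdef]
            linarith
          have e4 : |⟪w k, c - z k⟫| ≤ ‖w k‖ * (K + ‖w k‖) := by
            calc |⟪w k, c - z k⟫| ≤ ‖w k‖ * ‖c - z k‖ := abs_real_inner_le_norm _ _
              _ ≤ ‖w k‖ * (K + ‖w k‖) :=
                  mul_le_mul_of_nonneg_left hzb (norm_nonneg _)
          have e5 : |⟪w k, c - z k⟫ / β k| ≤ (‖w k‖ * (K + ‖w k‖)) / b := by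
            rw [abs_div, abs_of_pos (hβpos k)]
            exact div_le_div₀ (by positivity) e4 hb0 (hbβ k)
          have e6 : |⟪F (x k), w k⟫| ≤ MF * ‖w k‖ := by
            calc |⟪F (x k), w k⟫| ≤ ‖F (x k)‖ * ‖w k‖ := abs_real_inner_le_norm _ _
              _ ≤ MF * ‖w k‖ :=
                  mul_le_mul_of_nonneg_right (hFxb k) (norm_nonneg _)
          have e7 : ‖r k‖ = |r k| := rfl
          rw [e7, hrdef]
          calc |⟪w k, c - z k⟫ / β k - ⟪F (x k), w k⟫|
              ≤ |⟪w k, c - z k⟫ / β k| + |⟪F (x k), w k⟫| := abs_sub _ _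
            _ ≤ ‖w k‖ * (K + ‖w k‖) / b + MF * ‖w k‖ := add_le_add e5 e6
            _ = 1 / b * (‖w k‖ * (K + ‖w k‖)) + MF * ‖w k‖ := by ring
        · have t1 : Filter.Tendsto (fun k => ‖w k‖ * (K + ‖w k‖)) Filter.atTop
              (nhds (0 * (K + 0))) :=
            hw0.mul (tendsto_const_nhds.add hw0)
          have t2 := (t1.const_mul (1 / b)).add (hw0.const_mul MF)
          simpa using t2
      have hlhs : Filter.Tendsto (fun k => ⟪F c, c - x k⟫) U (nhds ⟪F c, c - xh⟫) := by
        have h7 : ∀ v : H, ⟪F c, c - v⟫ = ⟪F c, c⟫ - ⟪v, F c⟫ := by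
          intro v
          rw [inner_sub_right, real_inner_comm v (F c)]
        have h8 := (tendsto_const_nhds (x := ⟪F c, c⟫) (f := (U : Filter ℕ))).sub
          (hxhw (F c))
        have h9 : (fun k => ⟪F c, c⟫ - ⟪x k, F c⟫) = fun k => ⟪F c, c - x k⟫ :=
          funext fun k => (h7 (x k)).symm
        rw [h9] at h8
        rw [h7 xh]
        exact h8
      exact le_of_tendsto_of_tendsto' (hr0.mono_left hU) hlhs hineq
    exact ⟨xh, ⟨hxhC, aux_minty C hCcv F L hLip xh hxhC hVIlim⟩, hxhw⟩
  -- assemble: pick a reference ultrafilter, then Opial-type uniqueness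
  set U0 : Ultrafilter ℕ := Ultrafilter.of Filter.atTop with hU0def
  have hU0le : ↑U0 ≤ (Filter.atTop : Filter ℕ) := Ultrafilter.of_le _
  obtain ⟨xh, hxhsol, hxhw⟩ := master U0 hU0le
  refine ⟨xh, hxhsol, ?_⟩
  intro u
  rw [Filter.tendsto_iff_ultrafilter]
  intro U hU
  obtain ⟨xb, hxbsol, hxbw⟩ := master U hU
  have heq : xb = xh := by
    obtain ⟨l1, hl1⟩ := hnormconv xh hxhsol.1 hxhsol.2
    obtain ⟨l2, hl2⟩ := hnormconv xb hxbsol.1 hxbsol.2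
    have hsq1 : Filter.Tendsto (fun k => ‖x k - xh‖ ^ 2) Filter.atTop (nhds (l1 ^ 2)) := by
      have := hl1.mul hl1
      simpa [pow_two] using this
    have hsq2 : Filter.Tendsto (fun k => ‖x k - xb‖ ^ 2) Filter.atTop (nhds (l2 ^ 2)) := by
      have := hl2.mul hl2
      simpa [pow_two] using this
    have hiden : ∀ k : ℕ,
        (‖xh‖ ^ 2 - ‖xb‖ ^ 2 - (‖x k - xh‖ ^ 2 - ‖x k - xb‖ ^ 2)) / 2 =
          ⟪x k, xh - xb⟫ := by
      intro k
      have e1 : ‖x k - xh‖ ^ 2 = ‖x k‖ ^ 2 - 2 * ⟪x k, xh⟫ + ‖xh‖ ^ 2 :=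
        norm_sub_sq_real _ _
      have e2 : ‖x k - xb‖ ^ 2 = ‖x k‖ ^ 2 - 2 * ⟪x k, xb⟫ + ‖xb‖ ^ 2 :=
        norm_sub_sq_real _ _
      have e3 : ⟪x k, xh - xb⟫ = ⟪x k, xh⟫ - ⟪x k, xb⟫ := inner_sub_right _ _ _
      rw [e1, e2, e3]
      ring
    have hlam : Filter.Tendsto (fun k => ⟪x k, xh - xb⟫) Filter.atTop
        (nhds ((‖xh‖ ^ 2 - ‖xb‖ ^ 2 - (l1 ^ 2 - l2 ^ 2)) / 2)) := by
      have h9 := ((tendsto_const_nhds (x := ‖xh‖ ^ 2 - ‖xb‖ ^ 2)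
        (f := (Filter.atTop : Filter ℕ))).sub (hsq1.sub hsq2)).div_const 2
      have h10 : (fun k => (‖xh‖ ^ 2 - ‖xb‖ ^ 2 -
          (‖x k - xh‖ ^ 2 - ‖x k - xb‖ ^ 2)) / 2) = fun k => ⟪x k, xh - xb⟫ :=
        funext fun k => hiden k
      rw [h10] at h9
      exact h9
    have hA1 : ⟪xh, xh - xb⟫ = (‖xh‖ ^ 2 - ‖xb‖ ^ 2 - (l1 ^ 2 - l2 ^ 2)) / 2 :=
      tendsto_nhds_unique (hxhw (xh - xb)) (hlam.mono_left hU0le)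
    have hA2 : ⟪xb, xh - xb⟫ = (‖xh‖ ^ 2 - ‖xb‖ ^ 2 - (l1 ^ 2 - l2 ^ 2)) / 2 :=
      tendsto_nhds_unique (hxbw (xh - xb)) (hlam.mono_left hU)
    have hz0 : ⟪xh - xb, xh - xb⟫ = (0 : ℝ) := by
      rw [inner_sub_left, hA1, hA2]
      ring
    have := inner_self_eq_zero.1 hz0
    have : xh = xb := by
      have h11 := sub_eq_zero.1 this
      exact h11
    exact this.symm
  rw [← heq]
  exact hxbw u
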